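/- (Theorema egregium in Brioschi form: the relation between the coefficients of the first and second fundamental forms obtained by substituting the intrinsic expression of the Gaussian curvature into K = (LN − M²)/(EG − F²).) For a smooth immersed parametrized surface r : U → ℝ³, at every point of U one has LN − M² = (D₁ − D₂)/(EG − F²), where D₁ = det [[−½E_vv + F_uv − ½G_uu, ½E_u, F_u − ½E_v], [F_v − ½G_u, E, F], [½G_v, F, G]] and D₂ = det [[0, ½E_v, ½G_u], [½E_v, E, F], [½G_u, F, G]]. -/

import Mathlib

noncomputable section

/-- Euclidean dot product on `ℝ³`. -/
def dot3 (x y : Fin 3 → ℝ) : ℝ := ∑ i, x i * y i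

/-- Partial derivative with respect to the first coordinate `u`. -/
def pdu {E : Type*} [NormedAddCommGroup E] [NormedSpace ℝ E]
    (f : ℝ × ℝ → E) (p : ℝ × ℝ) : E := fderiv ℝ f p (1, 0)

/-- Partial derivative with respect to the second coordinate `v`. -/
def pdv {E : Type*} [NormedAddCommGroup E] [NormedSpace ℝ E]
    (f : ℝ × ℝ → E) (p : ℝ × ℝ) : E := fderiv ℝ f p (0, 1)

variable (r : ℝ × ℝ → Fin 3 → ℝ)

/-- Coefficient `E = ⟨r_u, r_u⟩` of the first fundamental form. -/
def Ec (p : ℝ × ℝ) : ℝ := dot3 (pdu r p) (pdu r p)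

/-- Coefficient `F = ⟨r_u, r_v⟩` of the first fundamental form. -/
def Fc (p : ℝ × ℝ) : ℝ := dot3 (pdu r p) (pdv r p)

/-- Coefficient `G = ⟨r_v, r_v⟩` of the first fundamental form. -/
def Gc (p : ℝ × ℝ) : ℝ := dot3 (pdv r p) (pdv r p)

/-- `W = √(EG − F²)`. -/
def Wc (p : ℝ × ℝ) : ℝ := Real.sqrt (Ec r p * Gc r p - Fc r p ^ 2)

/-- Unit normal `n = (r_u × r_v)/W`. -/
def nc (p : ℝ × ℝ) : Fin 3 → ℝ := (Wc r p)⁻¹ • (crossProduct (pdu r p) (pdv r p))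

/-- Coefficient `L = ⟨r_uu, n⟩` of the second fundamental form. -/
def Lc (p : ℝ × ℝ) : ℝ := dot3 (pdu (pdu r) p) (nc r p)

/-- Coefficient `M = ⟨r_uv, n⟩` of the second fundamental form. -/
def Mc (p : ℝ × ℝ) : ℝ := dot3 (pdv (pdu r) p) (nc r p)

/-- Coefficient `N = ⟨r_vv, n⟩` of the second fundamental form. -/
def Nc (p : ℝ × ℝ) : ℝ := dot3 (pdv (pdv r) p) (nc r p)

/-- Christoffel symbol `Γ¹₁₁`. -/
def Γ111 (p : ℝ × ℝ) : ℝ :=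
  (Gc r p * pdu (Ec r) p - 2 * Fc r p * pdu (Fc r) p + Fc r p * pdv (Ec r) p) /
    (2 * Wc r p ^ 2)

/-- Christoffel symbol `Γ²₁₁`. -/
def Γ211 (p : ℝ × ℝ) : ℝ :=
  (2 * Ec r p * pdu (Fc r) p - Ec r p * pdv (Ec r) p - Fc r p * pdu (Ec r) p) /
    (2 * Wc r p ^ 2)

/-- Christoffel symbol `Γ¹₁₂`. -/
def Γ112 (p : ℝ × ℝ) : ℝ :=
  (Gc r p * pdv (Ec r) p - Fc r p * pdu (Gc r) p) / (2 * Wc r p ^ 2)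

/-- Christoffel symbol `Γ²₁₂`. -/
def Γ212 (p : ℝ × ℝ) : ℝ :=
  (Ec r p * pdu (Gc r) p - Fc r p * pdv (Ec r) p) / (2 * Wc r p ^ 2)

/-- Christoffel symbol `Γ¹₂₂`. -/
def Γ122 (p : ℝ × ℝ) : ℝ :=
  (2 * Gc r p * pdv (Fc r) p - Gc r p * pdu (Gc r) p - Fc r p * pdv (Gc r) p) /
    (2 * Wc r p ^ 2)

/-- Christoffel symbol `Γ²₂₂`. -/
def Γ222 (p : ℝ × ℝ) : ℝ :=
  (Ec r p * pdv (Gc r) p - 2 * Fc r p * pdv (Fc r) p + Fc r p * pdu (Gc r) p) /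
    (2 * Wc r p ^ 2)

/-- `Δ = L/√(EG − F²)`. -/
def Δ0 (p : ℝ × ℝ) : ℝ := Lc r p / Wc r p

/-- `Δ' = M/√(EG − F²)`. -/
def Δ1 (p : ℝ × ℝ) : ℝ := Mc r p / Wc r p

/-- `Δ'' = N/√(EG − F²)`. -/
def Δ2 (p : ℝ × ℝ) : ℝ := Nc r p / Wc r p

/-- Brioschi determinant `D₁`. -/
def D1 (p : ℝ × ℝ) : ℝ :=
  Matrix.det
    !![-(1 / 2) * pdv (pdv (Ec r)) p + pdv (pdu (Fc r)) p - (1 / 2) * pdu (pdu (Gc r)) p,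
        (1 / 2) * pdu (Ec r) p, pdu (Fc r) p - (1 / 2) * pdv (Ec r) p;
      pdv (Fc r) p - (1 / 2) * pdu (Gc r) p, Ec r p, Fc r p;
      (1 / 2) * pdv (Gc r) p, Fc r p, Gc r p]

/-- Brioschi determinant `D₂`. -/
def D2 (p : ℝ × ℝ) : ℝ :=
  Matrix.det
    !![0, (1 / 2) * pdv (Ec r) p, (1 / 2) * pdu (Gc r) p;
      (1 / 2) * pdv (Ec r) p, Ec r p, Fc r p;
      (1 / 2) * pdu (Gc r) p, Fc r p, Gc r p]

section helpers
variable {V : Type*} [NormedAddCommGroup V] [NormedSpace ℝ V]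

lemma contDiffOn_pd {f : ℝ × ℝ → V} {U : Set (ℝ × ℝ)} (hU : IsOpen U)
    (hf : ContDiffOn ℝ (⊤ : ℕ∞) f U) (w : ℝ × ℝ) :
    ContDiffOn ℝ (⊤ : ℕ∞) (fun p => fderiv ℝ f p w) U := by
  have h1 : ContDiffOn ℝ (⊤ : ℕ∞) (fderiv ℝ f) U :=
    hf.fderiv_of_isOpen hU (by exact_mod_cast le_top)
  exact (ContinuousLinearMap.apply ℝ V w).contDiff.comp_contDiffOn h1

lemma diffAt_of_cdOn {f : ℝ × ℝ → V} {U : Set (ℝ × ℝ)} (hU : IsOpen U)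
    (hf : ContDiffOn ℝ (⊤ : ℕ∞) f U) {p : ℝ × ℝ} (hp : p ∈ U) :
    DifferentiableAt ℝ f p :=
  (hf.contDiffAt (hU.mem_nhds hp)).differentiableAt (by simp)

lemma pd_congr {φ ψ : ℝ × ℝ → V} {U : Set (ℝ × ℝ)} (hU : IsOpen U)
    {p : ℝ × ℝ} (hp : p ∈ U) (h : ∀ z ∈ U, φ z = ψ z) (w : ℝ × ℝ) :
    fderiv ℝ φ p w = fderiv ℝ ψ p w := by
  have hev : φ =ᶠ[nhds p] ψ := by
    filter_upwards [hU.mem_nhds hp] with z hz using h z hz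
  rw [hev.fderiv_eq]

lemma pd_pd_eq {f : ℝ × ℝ → V} {p : ℝ × ℝ}
    (hd : DifferentiableAt ℝ (fderiv ℝ f) p) (w1 w2 : ℝ × ℝ) :
    fderiv ℝ (fun z => fderiv ℝ f z w1) p w2 = fderiv ℝ (fderiv ℝ f) p w2 w1 := by
  have h : HasFDerivAt (fun z => (ContinuousLinearMap.apply ℝ V w1) (fderiv ℝ f z))
      ((ContinuousLinearMap.apply ℝ V w1).comp (fderiv ℝ (fderiv ℝ f) p)) p :=
    (ContinuousLinearMap.apply ℝ V w1).hasFDerivAt.comp p hd.hasFDerivAt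
  have := h.fderiv
  simp only [ContinuousLinearMap.apply_apply] at this
  rw [this]
  rfl

lemma pd_comm {f : ℝ × ℝ → V} {U : Set (ℝ × ℝ)} (hU : IsOpen U)
    (hf : ContDiffOn ℝ (⊤ : ℕ∞) f U) {p : ℝ × ℝ} (hp : p ∈ U) :
    pdv (pdu f) p = pdu (pdv f) p := by
  have hd' : ContDiffOn ℝ (⊤ : ℕ∞) (fderiv ℝ f) U :=
    hf.fderiv_of_isOpen hU (by exact_mod_cast le_top)
  have hd : DifferentiableAt ℝ (fderiv ℝ f) p := diffAt_of_cdOn hU hd' hp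
  have hev : ∀ᶠ y in nhds p, HasFDerivAt f (fderiv ℝ f y) y := by
    filter_upwards [hU.mem_nhds hp] with y hy
    exact (diffAt_of_cdOn hU hf hy).hasFDerivAt
  have hsymm := second_derivative_symmetric_of_eventually hev hd.hasFDerivAt (0,1) (1,0)
  unfold pdu pdv
  rw [pd_pd_eq hd (1,0) (0,1), pd_pd_eq hd (0,1) (1,0), hsymm]

end helpers

/-- The derivative of `z ↦ dot3 (f z) (g z)` as a continuous linear map. -/
def dotD (f g : ℝ × ℝ → Fin 3 → ℝ) (p : ℝ × ℝ) : (ℝ × ℝ) →L[ℝ] ℝ :=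
  ∑ i : Fin 3, (f p i • (ContinuousLinearMap.proj i).comp (fderiv ℝ g p)
    + g p i • (ContinuousLinearMap.proj i).comp (fderiv ℝ f p))

lemma hasFDerivAt_dot3 {f g : ℝ × ℝ → Fin 3 → ℝ} {p : ℝ × ℝ}
    (hf : DifferentiableAt ℝ f p) (hg : DifferentiableAt ℝ g p) :
    HasFDerivAt (fun z => dot3 (f z) (g z)) (dotD f g p) p := by
  have hfi : ∀ i : Fin 3, HasFDerivAt (fun z => f z i)
      ((ContinuousLinearMap.proj i).comp (fderiv ℝ f p)) p := fun i => by
    exact (ContinuousLinearMap.proj i).hasFDerivAt.comp p hf.hasFDerivAt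
  have hgi : ∀ i : Fin 3, HasFDerivAt (fun z => g z i)
      ((ContinuousLinearMap.proj i).comp (fderiv ℝ g p)) p := fun i => by
    exact (ContinuousLinearMap.proj i).hasFDerivAt.comp p hg.hasFDerivAt
  have := HasFDerivAt.fun_sum (u := (Finset.univ : Finset (Fin 3)))
    (fun i _ => (hfi i).mul (hgi i))
  simpa [dot3, dotD] using this

lemma dotD_apply {f g : ℝ × ℝ → Fin 3 → ℝ} {p : ℝ × ℝ} (w : ℝ × ℝ) :
    dotD f g p w = dot3 (fderiv ℝ f p w) (g p) + dot3 (f p) (fderiv ℝ g p w) := by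
  simp only [dotD, dot3, ContinuousLinearMap.sum_apply, ContinuousLinearMap.add_apply,
    ContinuousLinearMap.coe_smul', Pi.smul_apply, ContinuousLinearMap.coe_comp',
    Function.comp_apply, ContinuousLinearMap.proj_apply, smul_eq_mul]
  rw [Finset.sum_add_distrib, add_comm]
  congr 1
  all_goals exact Finset.sum_congr rfl fun i _ => by ring

lemma fderiv_dot3 {f g : ℝ × ℝ → Fin 3 → ℝ} {p : ℝ × ℝ}
    (hf : DifferentiableAt ℝ f p) (hg : DifferentiableAt ℝ g p) (w : ℝ × ℝ) :
    fderiv ℝ (fun z => dot3 (f z) (g z)) p w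
      = dot3 (fderiv ℝ f p w) (g p) + dot3 (f p) (fderiv ℝ g p w) := by
  rw [(hasFDerivAt_dot3 hf hg).fderiv, dotD_apply]

lemma fderiv_dot3_add {f g h k : ℝ × ℝ → Fin 3 → ℝ} {p : ℝ × ℝ}
    (hf : DifferentiableAt ℝ f p) (hg : DifferentiableAt ℝ g p)
    (hh : DifferentiableAt ℝ h p) (hk : DifferentiableAt ℝ k p) (w : ℝ × ℝ) :
    fderiv ℝ (fun z => dot3 (f z) (g z) + dot3 (h z) (k z)) p w
      = (dot3 (fderiv ℝ f p w) (g p) + dot3 (f p) (fderiv ℝ g p w))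
        + (dot3 (fderiv ℝ h p w) (k p) + dot3 (h p) (fderiv ℝ k p w)) := by
  rw [((hasFDerivAt_dot3 hf hg).fun_add (hasFDerivAt_dot3 hh hk)).fderiv]
  simp [dotD_apply]

lemma dot3_smul_right (s : ℝ) (u v : Fin 3 → ℝ) :
    dot3 u (s • v) = s * dot3 u v := by
  simp [dot3, Finset.mul_sum]; exact Finset.sum_congr rfl fun i _ => by ring

lemma dot3_self_pos {w : Fin 3 → ℝ} (h : w ≠ 0) : 0 < dot3 w w := by
  have h' : w 0 ≠ 0 ∨ w 1 ≠ 0 ∨ w 2 ≠ 0 := by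
    by_contra h''
    push_neg at h''
    exact h (funext fun i => by fin_cases i <;> simp [h''.1, h''.2.1, h''.2.2])
  simp only [dot3, Fin.sum_univ_three]
  rcases h' with h | h | h <;>
    nlinarith [mul_self_pos.mpr h, mul_self_nonneg (w 0), mul_self_nonneg (w 1),
      mul_self_nonneg (w 2)]

lemma lagrange (x y : Fin 3 → ℝ) :
    dot3 (crossProduct x y) (crossProduct x y)
      = dot3 x x * dot3 y y - dot3 x y ^ 2 := by
  simp [dot3, cross_apply, Fin.sum_univ_three]
  ring


theorem brioschi_gauss_equation
    (U : Set (ℝ × ℝ)) (hU : IsOpen U)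
    (hr : ContDiffOn ℝ (⊤ : ℕ∞) r U)
    (hind : ∀ p ∈ U, LinearIndependent ℝ ![pdu r p, pdv r p]) :
    ∀ p ∈ U,
      Lc r p * Nc r p - Mc r p ^ 2 =
        (D1 r p - D2 r p) / (Ec r p * Gc r p - Fc r p ^ 2) := by
  intro p hp
  have hr1 : ContDiffOn ℝ (⊤ : ℕ∞) (pdu r) U := contDiffOn_pd hU hr (1,0)
  have hr2 : ContDiffOn ℝ (⊤ : ℕ∞) (pdv r) U := contDiffOn_pd hU hr (0,1)
  have hr11 : ContDiffOn ℝ (⊤ : ℕ∞) (pdu (pdu r)) U := contDiffOn_pd hU hr1 (1,0)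
  have hr12 : ContDiffOn ℝ (⊤ : ℕ∞) (pdv (pdu r)) U := contDiffOn_pd hU hr1 (0,1)
  have hr21 : ContDiffOn ℝ (⊤ : ℕ∞) (pdu (pdv r)) U := contDiffOn_pd hU hr2 (1,0)
  have d1 : ∀ z ∈ U, DifferentiableAt ℝ (pdu r) z := fun z hz => diffAt_of_cdOn hU hr1 hz
  have d2 : ∀ z ∈ U, DifferentiableAt ℝ (pdv r) z := fun z hz => diffAt_of_cdOn hU hr2 hz
  have d11 : ∀ z ∈ U, DifferentiableAt ℝ (pdu (pdu r)) z :=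
    fun z hz => diffAt_of_cdOn hU hr11 hz
  have d12 : ∀ z ∈ U, DifferentiableAt ℝ (pdv (pdu r)) z :=
    fun z hz => diffAt_of_cdOn hU hr12 hz
  have d21 : ∀ z ∈ U, DifferentiableAt ℝ (pdu (pdv r)) z :=
    fun z hz => diffAt_of_cdOn hU hr21 hz
  -- first derivatives of E, F, G on U
  have hEu : ∀ z ∈ U, pdu (Ec r) z
      = dot3 (pdu (pdu r) z) (pdu r z) + dot3 (pdu r z) (pdu (pdu r) z) :=
    fun z hz => fderiv_dot3 (d1 z hz) (d1 z hz) (1,0)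
  have hEv : ∀ z ∈ U, pdv (Ec r) z
      = dot3 (pdv (pdu r) z) (pdu r z) + dot3 (pdu r z) (pdv (pdu r) z) :=
    fun z hz => fderiv_dot3 (d1 z hz) (d1 z hz) (0,1)
  have hFu : ∀ z ∈ U, pdu (Fc r) z
      = dot3 (pdu (pdu r) z) (pdv r z) + dot3 (pdu r z) (pdu (pdv r) z) :=
    fun z hz => fderiv_dot3 (d1 z hz) (d2 z hz) (1,0)
  have hFv : ∀ z ∈ U, pdv (Fc r) z
      = dot3 (pdv (pdu r) z) (pdv r z) + dot3 (pdu r z) (pdv (pdv r) z) :=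
    fun z hz => fderiv_dot3 (d1 z hz) (d2 z hz) (0,1)
  have hGu : ∀ z ∈ U, pdu (Gc r) z
      = dot3 (pdu (pdv r) z) (pdv r z) + dot3 (pdv r z) (pdu (pdv r) z) :=
    fun z hz => fderiv_dot3 (d2 z hz) (d2 z hz) (1,0)
  have hGv : ∀ z ∈ U, pdv (Gc r) z
      = dot3 (pdv (pdv r) z) (pdv r z) + dot3 (pdv r z) (pdv (pdv r) z) :=
    fun z hz => fderiv_dot3 (d2 z hz) (d2 z hz) (0,1)
  -- second derivatives at p
  have hEvv : pdv (pdv (Ec r)) p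
      = (dot3 (pdv (pdv (pdu r)) p) (pdu r p) + dot3 (pdv (pdu r) p) (pdv (pdu r) p))
        + (dot3 (pdv (pdu r) p) (pdv (pdu r) p) + dot3 (pdu r p) (pdv (pdv (pdu r)) p)) := by
    show fderiv ℝ (pdv (Ec r)) p (0,1) = _
    rw [pd_congr (ψ := fun z =>
        dot3 (pdv (pdu r) z) (pdu r z) + dot3 (pdu r z) (pdv (pdu r) z)) hU hp hEv (0,1)]
    exact fderiv_dot3_add (d12 p hp) (d1 p hp) (d1 p hp) (d12 p hp) (0,1)
  have hFuv : pdv (pdu (Fc r)) p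
      = (dot3 (pdv (pdu (pdu r)) p) (pdv r p) + dot3 (pdu (pdu r) p) (pdv (pdv r) p))
        + (dot3 (pdv (pdu r) p) (pdu (pdv r) p) + dot3 (pdu r p) (pdv (pdu (pdv r)) p)) := by
    show fderiv ℝ (pdu (Fc r)) p (0,1) = _
    rw [pd_congr (ψ := fun z =>
        dot3 (pdu (pdu r) z) (pdv r z) + dot3 (pdu r z) (pdu (pdv r) z)) hU hp hFu (0,1)]
    exact fderiv_dot3_add (d11 p hp) (d2 p hp) (d1 p hp) (d21 p hp) (0,1)
  have hGuu : pdu (pdu (Gc r)) p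
      = (dot3 (pdu (pdu (pdv r)) p) (pdv r p) + dot3 (pdu (pdv r) p) (pdu (pdv r) p))
        + (dot3 (pdu (pdv r) p) (pdu (pdv r) p) + dot3 (pdv r p) (pdu (pdu (pdv r)) p)) := by
    show fderiv ℝ (pdu (Gc r)) p (1,0) = _
    rw [pd_congr (ψ := fun z =>
        dot3 (pdu (pdv r) z) (pdv r z) + dot3 (pdv r z) (pdu (pdv r) z)) hU hp hGu (1,0)]
    exact fderiv_dot3_add (d21 p hp) (d2 p hp) (d2 p hp) (d21 p hp) (1,0)
  -- symmetry of mixed partials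
  have hcomm : ∀ z ∈ U, pdu (pdv r) z = pdv (pdu r) z :=
    fun z hz => (pd_comm hU hr hz).symm
  have hb : pdu (pdv r) p = pdv (pdu r) p := hcomm p hp
  have hq : pdu (pdu (pdv r)) p = pdv (pdu (pdu r)) p := by
    have e1 : fderiv ℝ (pdu (pdv r)) p (1,0) = fderiv ℝ (pdv (pdu r)) p (1,0) :=
      pd_congr hU hp hcomm (1,0)
    have e2 : pdu (pdv (pdu r)) p = pdv (pdu (pdu r)) p := (pd_comm hU hr1 hp).symm
    exact e1.trans e2
  have hm : pdv (pdu (pdv r)) p = pdv (pdv (pdu r)) p := pd_congr hU hp hcomm (0,1)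
  -- cross product facts
  have hBne : crossProduct (pdu r p) (pdv r p) ≠ 0 :=
    crossProduct_ne_zero_iff_linearIndependent.mpr (hind p hp)
  have hpos : 0 < Ec r p * Gc r p - Fc r p ^ 2 := by
    have h0 := dot3_self_pos hBne
    rw [lagrange] at h0
    exact h0
  have hWpos : 0 < Wc r p := Real.sqrt_pos.mpr hpos
  have hW2 : Wc r p ^ 2 = Ec r p * Gc r p - Fc r p ^ 2 := Real.sq_sqrt hpos.le
  have hL : Lc r p = (Wc r p)⁻¹ * dot3 (pdu (pdu r) p) (crossProduct (pdu r p) (pdv r p)) :=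
    dot3_smul_right _ _ _
  have hM : Mc r p = (Wc r p)⁻¹ * dot3 (pdv (pdu r) p) (crossProduct (pdu r p) (pdv r p)) :=
    dot3_smul_right _ _ _
  have hN : Nc r p = (Wc r p)⁻¹ * dot3 (pdv (pdv r) p) (crossProduct (pdu r p) (pdv r p)) :=
    dot3_smul_right _ _ _
  have hkey : D1 r p - D2 r p
      = dot3 (pdu (pdu r) p) (crossProduct (pdu r p) (pdv r p))
          * dot3 (pdv (pdv r) p) (crossProduct (pdu r p) (pdv r p))
        - dot3 (pdv (pdu r) p) (crossProduct (pdu r p) (pdv r p)) ^ 2 := by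
    unfold D1 D2
    rw [hEvv, hFuv, hGuu, hEu p hp, hEv p hp, hFu p hp, hFv p hp, hGu p hp, hGv p hp,
      hb, hq, hm]
    simp only [Ec, Fc, Gc, dot3, cross_apply, Matrix.det_fin_three, Fin.sum_univ_three,
      Matrix.cons_val', Matrix.cons_val_zero, Matrix.cons_val_one, Matrix.head_cons,
      Matrix.empty_val', Matrix.cons_val_fin_one, Matrix.head_fin_const, Matrix.of_apply,
      Matrix.cons_val_two, Matrix.tail_cons]
    ring
  rw [hL, hM, hN, hkey, ← hW2]
  field_simp

end
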